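/- For every natural number n, the triangulated grid H_n has a strict 3-queue layout, i.e. sqn(H_n) ≤ 3. In particular, the linear order on {1,…,n}² that lists vertices (x,y) by increasing y and, within each fixed y, by increasing x, together with the assignment placing all horizontal edges (x,y)(x+1,y) in one queue, all vertical edges (x,y)(x,y+1) in a second queue, and all diagonal edges (x,y)(x+1,y+1) in a third queue, is a strict 3-queue layout of H_n. -/

import Mathlib

open SimpleGraph

/-- Two (unordered) pairs of vertices cross with respect to the strict order `lt`:
with `e = {v,w}`, `f = {x,y}`, `v ≺ w`, `x ≺ y`, they cross if
`v ≺ x ≺ w ≺ y` or `x ≺ v ≺ y ≺ w`. -/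
def Cross {V : Type*} (lt : V → V → Prop) (e f : Sym2 V) : Prop :=
  ∃ v w x y : V, e = s(v, w) ∧ f = s(x, y) ∧
    ((lt v x ∧ lt x w ∧ lt w y) ∨ (lt x v ∧ lt v y ∧ lt y w))

/-- Two (unordered) pairs of vertices nest with respect to the strict order `lt`:
with `e = {v,w}`, `f = {x,y}`, `v ≺ w`, `x ≺ y`, they nest if
`v ≺ x ≺ y ≺ w` or `x ≺ v ≺ w ≺ y`. -/
def Nest {V : Type*} (lt : V → V → Prop) (e f : Sym2 V) : Prop :=
  ∃ v w x y : V, e = s(v, w) ∧ f = s(x, y) ∧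
    ((lt v x ∧ lt x y ∧ lt y w) ∨ (lt x v ∧ lt v w ∧ lt w y))

/-- `(lt, φ)` is a `k`-stack layout of `G`: `lt` is a linear (strict total) order on the
vertices and no two edges with the same colour cross. -/
def IsStackLayout {V : Type*} {k : ℕ} (G : SimpleGraph V)
    (lt : V → V → Prop) (φ : Sym2 V → Fin k) : Prop :=
  IsStrictTotalOrder V lt ∧
    ∀ e ∈ G.edgeSet, ∀ f ∈ G.edgeSet, φ e = φ f → ¬ Cross lt e f

/-- `(lt, φ)` is a `k`-queue layout of `G`: `lt` is a linear (strict total) order on the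
vertices and no two edges with the same colour nest. -/
def IsQueueLayout {V : Type*} {k : ℕ} (G : SimpleGraph V)
    (lt : V → V → Prop) (φ : Sym2 V → Fin k) : Prop :=
  IsStrictTotalOrder V lt ∧
    ∀ e ∈ G.edgeSet, ∀ f ∈ G.edgeSet, φ e = φ f → ¬ Nest lt e f

/-- The stack-number of `G`: the least `k` such that `G` has a `k`-stack layout. -/
noncomputable def stackNumber {V : Type*} (G : SimpleGraph V) : ℕ :=
  sInf {k | ∃ (lt : V → V → Prop) (φ : Sym2 V → Fin k), IsStackLayout G lt φ}

/-- The queue-number of `G`: the least `k` such that `G` has a `k`-queue layout. -/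
noncomputable def queueNumber {V : Type*} (G : SimpleGraph V) : ℕ :=
  sInf {k | ∃ (lt : V → V → Prop) (φ : Sym2 V → Fin k), IsQueueLayout G lt φ}

/-- A queue layout is strict if for every vertex `u` and neighbours `v, w` of `u` with
`u ≺ v ≺ w` or `v ≺ w ≺ u`, the edges `uv` and `uw` get different colours. -/
def IsStrictQueueLayout {V : Type*} {k : ℕ} (G : SimpleGraph V)
    (lt : V → V → Prop) (φ : Sym2 V → Fin k) : Prop :=
  IsQueueLayout G lt φ ∧
    ∀ u v w : V, G.Adj u v → G.Adj u w →
      ((lt u v ∧ lt v w) ∨ (lt v w ∧ lt w u)) → φ s(u, v) ≠ φ s(u, w)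

/-- The strict queue-number of `G`. -/
noncomputable def strictQueueNumber {V : Type*} (G : SimpleGraph V) : ℕ :=
  sInf {k | ∃ (lt : V → V → Prop) (φ : Sym2 V → Fin k), IsStrictQueueLayout G lt φ}

/-- A stack layout is dispersable if the colouring is a proper edge-colouring. -/
def IsDispersableStackLayout {V : Type*} {k : ℕ} (G : SimpleGraph V)
    (lt : V → V → Prop) (φ : Sym2 V → Fin k) : Prop :=
  IsStackLayout G lt φ ∧
    ∀ u v w : V, G.Adj u v → G.Adj u w → v ≠ w → φ s(u, v) ≠ φ s(u, w)

/-- The dispersable stack-number of `G`. -/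
noncomputable def dispersableStackNumber {V : Type*} (G : SimpleGraph V) : ℕ :=
  sInf {k | ∃ (lt : V → V → Prop) (φ : Sym2 V → Fin k), IsDispersableStackLayout G lt φ}

/-- The star `S_b` with root `none` and leaves `some i`, `i : Fin b`. -/
def starGraph (b : ℕ) : SimpleGraph (Option (Fin b)) :=
  SimpleGraph.fromRel (fun v w => v = none ∧ w ≠ none)

/-- The triangulated grid `H_n` on vertex set `Fin n × Fin n` (0-indexed), with horizontal
edges `(x,y)(x+1,y)`, vertical edges `(x,y)(x,y+1)` and diagonal edges `(x,y)(x+1,y+1)`. -/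
def triGrid (n : ℕ) : SimpleGraph (Fin n × Fin n) :=
  SimpleGraph.fromRel (fun p q =>
    ((p.1 : ℕ) + 1 = (q.1 : ℕ) ∧ p.2 = q.2) ∨
    (p.1 = q.1 ∧ (p.2 : ℕ) + 1 = (q.2 : ℕ)) ∨
    ((p.1 : ℕ) + 1 = (q.1 : ℕ) ∧ (p.2 : ℕ) + 1 = (q.2 : ℕ)))

/-- The row-by-row order on `{1,…,n}²`: `(x,y)` before `(x',y')` iff `y < y'`, or
`y = y'` and `x < x'`. -/
def rowOrder (n : ℕ) (p q : Fin n × Fin n) : Prop :=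
  (p.2 : ℕ) < (q.2 : ℕ) ∨ (p.2 = q.2 ∧ (p.1 : ℕ) < (q.1 : ℕ))

/-- Linearise `Fin n × Fin n` row by row. -/
def kk (n : ℕ) (p : Fin n × Fin n) : ℕ := (p.2 : ℕ) * n + (p.1 : ℕ)

lemma rowOrder_iff (n : ℕ) (p q : Fin n × Fin n) :
    rowOrder n p q ↔ kk n p < kk n q := by
  unfold rowOrder kk
  constructor
  · rintro (h | ⟨h1, h2⟩)
    · have h1 : (p.1 : ℕ) < n := p.1.isLt
      have h3 : ((p.2 : ℕ) + 1) * n ≤ (q.2 : ℕ) * n := Nat.mul_le_mul_right n h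
      have h4 : ((p.2 : ℕ) + 1) * n = (p.2 : ℕ) * n + n := by ring
      linarith
    · have h3 : (p.2 : ℕ) * n = (q.2 : ℕ) * n := by rw [h1]
      linarith
  · intro h
    rcases lt_trichotomy (p.2 : ℕ) (q.2 : ℕ) with h2 | h2 | h2
    · exact Or.inl h2
    · have h3 : (p.2 : ℕ) * n = (q.2 : ℕ) * n := by rw [h2]
      exact Or.inr ⟨Fin.ext h2, by linarith⟩
    · exfalso
      have h1 : (q.1 : ℕ) < n := q.1.isLt
      have h3 : ((q.2 : ℕ) + 1) * n ≤ (p.2 : ℕ) * n := Nat.mul_le_mul_right n h2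
      have h4 : ((q.2 : ℕ) + 1) * n = (q.2 : ℕ) * n + n := by ring
      linarith

lemma kk_inj (n : ℕ) (p q : Fin n × Fin n) (h : kk n p = kk n q) : p = q := by
  rcases lt_trichotomy (p.2 : ℕ) (q.2 : ℕ) with h2 | h2 | h2
  · exact absurd h ((rowOrder_iff n p q).mp (Or.inl h2)).ne
  · have h2' : p.2 = q.2 := Fin.ext h2
    have h3 : (p.2 : ℕ) * n = (q.2 : ℕ) * n := by rw [h2]
    have h4 : (p.1 : ℕ) = (q.1 : ℕ) := by unfold kk at h; linarith
    exact Prod.ext (Fin.ext h4) h2'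
  · exact absurd h ((rowOrder_iff n q p).mp (Or.inl h2)).ne'

/-- the row-by-row order together with any assignment placing horizontal
edges in queue `0`, vertical edges in queue `1` and diagonal edges in queue `2` is a
strict 3-queue layout of `H_n`; in particular `sqn(H_n) ≤ 3`. -/
theorem stmt3 (n : ℕ) (φ : Sym2 (Fin n × Fin n) → Fin 3)
    (hH : ∀ p q : Fin n × Fin n, (p.1 : ℕ) + 1 = (q.1 : ℕ) → p.2 = q.2 → φ s(p, q) = 0)
    (hV : ∀ p q : Fin n × Fin n, p.1 = q.1 → (p.2 : ℕ) + 1 = (q.2 : ℕ) → φ s(p, q) = 1)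
    (hD : ∀ p q : Fin n × Fin n, (p.1 : ℕ) + 1 = (q.1 : ℕ) → (p.2 : ℕ) + 1 = (q.2 : ℕ) →
      φ s(p, q) = 2) :
    IsStrictQueueLayout (triGrid n) (rowOrder n) φ ∧ strictQueueNumber (triGrid n) ≤ 3 := by
  have hlt := rowOrder_iff n
  -- every edge has a well-defined "gap" determined by its colour
  have hadj : ∀ p q : Fin n × Fin n, (triGrid n).Adj p q →
      ∃ d : ℕ, (kk n q = kk n p + d ∨ kk n p = kk n q + d) ∧
        ((φ s(p, q) = 0 ∧ d = 1) ∨ (φ s(p, q) = 1 ∧ d = n) ∨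
          (φ s(p, q) = 2 ∧ d = n + 1)) := by
    intro p q h
    rw [triGrid, SimpleGraph.fromRel_adj] at h
    obtain ⟨-, h | h⟩ := h
    · rcases h with ⟨h1, h2⟩ | ⟨h1, h2⟩ | ⟨h1, h2⟩
      · refine ⟨1, Or.inl ?_, Or.inl ⟨hH p q h1 h2, rfl⟩⟩
        have h3 : (p.2 : ℕ) * n = (q.2 : ℕ) * n := by rw [h2]
        unfold kk; linarith
      · refine ⟨n, Or.inl ?_, Or.inr (Or.inl ⟨hV p q h1 h2, rfl⟩)⟩
        have h3 : (q.2 : ℕ) * n = (p.2 : ℕ) * n + n := by rw [← h2]; ring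
        have h4 : (p.1 : ℕ) = (q.1 : ℕ) := by rw [h1]
        unfold kk; linarith
      · refine ⟨n + 1, Or.inl ?_, Or.inr (Or.inr ⟨hD p q h1 h2, rfl⟩)⟩
        have h3 : (q.2 : ℕ) * n = (p.2 : ℕ) * n + n := by rw [← h2]; ring
        unfold kk; linarith
    · rcases h with ⟨h1, h2⟩ | ⟨h1, h2⟩ | ⟨h1, h2⟩
      · refine ⟨1, Or.inr ?_, Or.inl ⟨by rw [Sym2.eq_swap]; exact hH q p h1 h2, rfl⟩⟩
        have h3 : (p.2 : ℕ) * n = (q.2 : ℕ) * n := by rw [h2]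
        unfold kk; linarith
      · refine ⟨n, Or.inr ?_, Or.inr (Or.inl ⟨by rw [Sym2.eq_swap]; exact hV q p h1 h2, rfl⟩)⟩
        have h3 : (p.2 : ℕ) * n = (q.2 : ℕ) * n + n := by rw [← h2]; ring
        have h4 : (q.1 : ℕ) = (p.1 : ℕ) := by rw [h1]
        unfold kk; linarith
      · refine ⟨n + 1, Or.inr ?_, Or.inr (Or.inr ⟨by rw [Sym2.eq_swap]; exact hD q p h1 h2, rfl⟩)⟩
        have h3 : (p.2 : ℕ) * n = (q.2 : ℕ) * n + n := by rw [← h2]; ring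
        unfold kk; linarith
  -- equal colours force equal gaps
  have hsame : ∀ p q r s : Fin n × Fin n, (triGrid n).Adj p q → (triGrid n).Adj r s →
      φ s(p, q) = φ s(r, s) →
      ∃ d : ℕ, (kk n q = kk n p + d ∨ kk n p = kk n q + d) ∧
        (kk n s = kk n r + d ∨ kk n r = kk n s + d) := by
    intro p q r s hpq hrs heq
    obtain ⟨d, hd, hc⟩ := hadj p q hpq
    obtain ⟨d', hd', hc'⟩ := hadj r s hrs
    rcases hc with ⟨hc, rfl⟩ | ⟨hc, rfl⟩ | ⟨hc, rfl⟩ <;>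
      rcases hc' with ⟨hc', rfl⟩ | ⟨hc', rfl⟩ | ⟨hc', rfl⟩ <;>
      rw [hc, hc'] at heq <;>
      first
        | exact ⟨_, hd, hd'⟩
        | exact absurd heq (by decide)
  have hsto : IsStrictTotalOrder (Fin n × Fin n) (rowOrder n) :=
    { trichotomous := by
        intro a b
        rcases lt_trichotomy (kk n a) (kk n b) with h | h | h
        · exact fun h1 _ => absurd ((hlt a b).mpr h) h1
        · exact fun _ _ => kk_inj n a b h
        · exact fun _ h2 => absurd ((hlt b a).mpr h) h2
      irrefl := fun a h => absurd ((hlt a a).mp h) (lt_irrefl _)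
      trans := fun a b c hab hbc =>
        (hlt a c).mpr (lt_trans ((hlt a b).mp hab) ((hlt b c).mp hbc)) }
  have hlayout : IsStrictQueueLayout (triGrid n) (rowOrder n) φ := by
    refine ⟨⟨hsto, ?_⟩, ?_⟩
    · intro e he f hf heq hnest
      obtain ⟨v, w, x, y, rfl, rfl, hchain⟩ := hnest
      rw [SimpleGraph.mem_edgeSet] at he hf
      obtain ⟨d, hd, hd'⟩ := hsame v w x y he hf heq
      simp only [hlt] at hchain
      set a := kk n v
      set b := kk n w
      set c := kk n x
      set e' := kk n y
      omega
    · intro u v w huv huw hchain heq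
      obtain ⟨d, hd, hd'⟩ := hsame u v u w huv huw heq
      simp only [hlt] at hchain
      set a := kk n u
      set b := kk n v
      set c := kk n w
      omega
  exact ⟨hlayout, Nat.sInf_le ⟨rowOrder n, φ, hlayout⟩⟩
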